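/- Let d ∈ (0,1) and let k ≥ 2 be an integer. Define the WENO-PM mapping function g on [0,1] by g(ω) = c₁(ω − d)^{k+1}(ω + c₂) + d, where c₁ = (−1)^k (k+1)/d^{k+1} and c₂ = d/(k+1) for ω ∈ [0,d], and c₁ = −(k+1)/(1−d)^{k+1} and c₂ = (d − (k+2))/(k+1) for ω ∈ (d,1]. Then g is monotone non-decreasing on [0,1]: for all ω₁, ω₂ ∈ [0,1] with ω₁ ≤ ω₂, one has g(ω₁) ≤ g(ω₂). -/

import Mathlib

lemma weno_hasDeriv (d a e : ℝ) (k : ℕ) (f : ℝ → ℝ)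
    (hf : ∀ ω : ℝ, f ω = a * (ω - d)^(k+1) * (ω + e) + d) (ω : ℝ) :
    HasDerivAt f (a * ((ω - d)^k * (((k:ℝ)+1) * (ω + e) + (ω - d)))) ω := by
  have h1 : HasDerivAt (fun x : ℝ => (x - d)^(k+1)) (((k:ℝ)+1) * (ω - d)^k) ω := by
    have := ((hasDerivAt_id ω).sub_const d).fun_pow (k+1)
    simpa using this
  have h2 : HasDerivAt (fun x : ℝ => x + e) 1 ω := (hasDerivAt_id ω).add_const e
  have h3 := ((h1.fun_mul h2).const_mul a).add_const d
  have heq : (fun x : ℝ => a * ((x - d)^(k+1) * (x + e)) + d) = f := by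
    funext x; rw [hf x]; ring
  rw [heq] at h3
  rw [show a * ((ω - d)^k * (((k:ℝ)+1) * (ω + e) + (ω - d))) = a * (((k:ℝ)+1) * (ω - d)^k * (ω + e) + (ω - d)^(k+1) * 1) by ring]
  exact h3

/-- For d ∈ (0,1) and an integer k ≥ 2, the WENO-PM piecewise
polynomial mapping function is monotone non-decreasing on [0,1]. -/
theorem wenoPM_monotone (d : ℝ) (hd : d ∈ Set.Ioo (0:ℝ) 1)
    (k : ℕ) (hk : 2 ≤ k)
    (Pm Pp g : ℝ → ℝ)
    (hPm : ∀ ω : ℝ, Pm ω =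
      ((-1:ℝ))^k * ((k:ℝ)+1) / d^(k+1) * (ω - d)^(k+1) * (ω + d/((k:ℝ)+1)) + d)
    (hPp : ∀ ω : ℝ, Pp ω =
      (-(((k:ℝ)+1) / (1-d)^(k+1))) * (ω - d)^(k+1) * (ω + (d - ((k:ℝ)+2))/((k:ℝ)+1)) + d)
    (hg : ∀ ω : ℝ, g ω = if ω ≤ d then Pm ω else Pp ω) :
    ∀ ω₁ ∈ Set.Icc (0:ℝ) 1, ∀ ω₂ ∈ Set.Icc (0:ℝ) 1, ω₁ ≤ ω₂ → g ω₁ ≤ g ω₂ := by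
  obtain ⟨hd0, hd1⟩ := hd
  have hk1 : ((k:ℝ)+1) ≠ 0 := by positivity
  have hPm' : ∀ ω : ℝ, Pm ω =
      ((-1:ℝ))^k * ((k:ℝ)+1) / d^(k+1) * (ω - d)^(k+1) * (ω + d/((k:ℝ)+1)) + d := hPm
  have hderM := weno_hasDeriv d (((-1:ℝ))^k * ((k:ℝ)+1) / d^(k+1)) (d/((k:ℝ)+1)) k Pm
    (by intro ω; rw [hPm ω])
  have hderP := weno_hasDeriv d (-(((k:ℝ)+1) / (1-d)^(k+1))) ((d - ((k:ℝ)+2))/((k:ℝ)+1)) k Pp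
    (by intro ω; rw [hPp ω])
  have hmonoM : MonotoneOn Pm (Set.Icc 0 d) := by
    apply monotoneOn_of_deriv_nonneg (convex_Icc _ _)
    · exact fun x _ => (hderM x).continuousAt.continuousWithinAt
    · exact fun x _ => (hderM x).differentiableAt.differentiableWithinAt
    · intro x hx
      rw [interior_Icc] at hx
      rw [(hderM x).deriv]
      have hxd : (d - x)^k = (-1:ℝ)^k * (x - d)^k := by
        rw [show d - x = -(x - d) by ring, neg_pow]
      have heq : ((-1:ℝ))^k * ((k:ℝ)+1) / d^(k+1) *
          ((x - d)^k * (((k:ℝ)+1) * (x + d/((k:ℝ)+1)) + (x - d)))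
          = ((k:ℝ)+1) / d^(k+1) * ((d - x)^k * (((k:ℝ)+2) * x)) := by
        rw [hxd]; field_simp; ring
      rw [heq]
      have h1 : (0:ℝ) ≤ ((k:ℝ)+1) / d^(k+1) := by positivity
      have h2 : (0:ℝ) ≤ (d - x)^k := pow_nonneg (by linarith [hx.2]) k
      have h3 : (0:ℝ) ≤ ((k:ℝ)+2) * x := by
        have : (0:ℝ) ≤ (k:ℝ)+2 := by positivity
        exact mul_nonneg this hx.1.le
      exact mul_nonneg h1 (mul_nonneg h2 h3)
  have hmonoP : MonotoneOn Pp (Set.Icc d 1) := by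
    apply monotoneOn_of_deriv_nonneg (convex_Icc _ _)
    · exact fun x _ => (hderP x).continuousAt.continuousWithinAt
    · exact fun x _ => (hderP x).differentiableAt.differentiableWithinAt
    · intro x hx
      rw [interior_Icc] at hx
      rw [(hderP x).deriv]
      have heq : (-(((k:ℝ)+1) / (1-d)^(k+1))) *
          ((x - d)^k * (((k:ℝ)+1) * (x + (d - ((k:ℝ)+2))/((k:ℝ)+1)) + (x - d)))
          = ((k:ℝ)+1) / (1-d)^(k+1) * ((x - d)^k * (((k:ℝ)+2) * (1 - x))) := by
        field_simp; ring
      rw [heq]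
      have h1 : (0:ℝ) ≤ ((k:ℝ)+1) / (1-d)^(k+1) := by
        have : (0:ℝ) < 1 - d := by linarith
        positivity
      have h2 : (0:ℝ) ≤ (x - d)^k := pow_nonneg (by linarith [hx.1]) k
      have h3 : (0:ℝ) ≤ ((k:ℝ)+2) * (1 - x) := by
        have : (0:ℝ) ≤ (k:ℝ)+2 := by positivity
        exact mul_nonneg this (by linarith [hx.2])
      exact mul_nonneg h1 (mul_nonneg h2 h3)
  have hPmd : Pm d = d := by
    rw [hPm]; rw [sub_self, zero_pow (Nat.succ_ne_zero k)]; ring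
  have hPpd : Pp d = d := by
    rw [hPp]; rw [sub_self, zero_pow (Nat.succ_ne_zero k)]; ring
  intro ω₁ hω₁ ω₂ hω₂ h12
  rw [hg, hg]
  split_ifs with h1 h2 h3
  · exact hmonoM ⟨hω₁.1, h1⟩ ⟨hω₂.1, h2⟩ h12
  · have step1 : Pm ω₁ ≤ Pm d := hmonoM ⟨hω₁.1, h1⟩ ⟨hd0.le, le_refl d⟩ h1
    have step2 : Pp d ≤ Pp ω₂ := hmonoP ⟨le_refl d, hd1.le⟩ ⟨(not_le.mp h2).le, hω₂.2⟩
      (not_le.mp h2).le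
    calc Pm ω₁ ≤ Pm d := step1
      _ = Pp d := by rw [hPmd, hPpd]
      _ ≤ Pp ω₂ := step2
  · exact absurd (le_trans h12 h3) h1
  · exact hmonoP ⟨(not_le.mp h1).le, hω₁.2⟩ ⟨(not_le.mp h3).le, hω₂.2⟩ h12
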